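/- arXiv:2109.15041 — 5 statements merged into one kernel-verified Lean document; each statement's English description precedes it below -/
import Mathlib

section
/- Fix R > R'' and δ ∈ (0,1/2). For t > 0, r > 0, ω ∈ S², ξ = (ξ₀,ξ₁,ξ₂,ξ₃) ∈ ℝ⁴ and τ ∈ ℝ, define p₁ := ξ₀² − Σ_{i=1}^3 ξ_i² + τ² t^{−δ−1}(2 − t^{−δ−1}), q := −2((1−t^{−δ−1})ξ₀ + Σ_{i=1}^3 ω_i ξ_i), and b := −4(δ+1)t^{−δ−2}ξ₀² + 4r^{−1}(Σ_{i=1}^3 ξ_i² − (Σ_{i=1}^3 ω_i ξ_i)²) − 4τ²(δ+1)t^{−δ−2}(1−t^{−δ−1})². Then there exists T₀ depending only on R and R'' such that for all t ≥ T₀, all r with R'' < r − t < R, all ω ∈ S², all ξ ∈ ℝ⁴ and all τ ∈ ℝ: b ≥ −r^{−1}q² − 4r^{−1}p₁ + t^{−δ−2}(ξ₀² + τ²) + 4 r^{−1} q (−1 + t^{−δ−1}) ξ₀. -/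
noncomputable section
open Real

namespace UCP

/-- The symbol `p₁ = ξ₀² - Σξᵢ² + τ² t^{-δ-1}(2 - t^{-δ-1})` of the conjugated wave
operator. -/
def p1sym (δ t τ : ℝ) (ξ : Fin 4 → ℝ) : ℝ :=
  ξ 0 ^ 2 - (∑ i : Fin 3, ξ i.succ ^ 2) + τ ^ 2 * t ^ (-δ - 1) * (2 - t ^ (-δ - 1))

/-- The rescaled symbol `q = p₂/(iτ) = -2((1-t^{-δ-1})ξ₀ + Σ ωᵢξᵢ)`. -/
def qsym (δ t : ℝ) (ω : Fin 3 → ℝ) (ξ : Fin 4 → ℝ) : ℝ :=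
  -2 * ((1 - t ^ (-δ - 1)) * ξ 0 + ∑ i : Fin 3, ω i * ξ i.succ)

/-- The rescaled Poisson bracket `b = (1/(iτ)){p₁,p₂}`. -/
def bsym (δ t r τ : ℝ) (ω : Fin 3 → ℝ) (ξ : Fin 4 → ℝ) : ℝ :=
  -4 * (δ + 1) * t ^ (-δ - 2) * ξ 0 ^ 2
    + 4 * r⁻¹ * ((∑ i : Fin 3, ξ i.succ ^ 2) - (∑ i : Fin 3, ω i * ξ i.succ) ^ 2)
    - 4 * τ ^ 2 * (δ + 1) * t ^ (-δ - 2) * (1 - t ^ (-δ - 1)) ^ 2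

set_option maxHeartbeats 1000000 in
/-- Lemma 3.4 of the paper: lower bound for the rescaled Poisson
bracket.  The threshold `T₀` depends only on `R` and `R''`. -/
theorem stmt6 (R R'' : ℝ) (hRR : R'' < R) :
    ∃ T₀ : ℝ, 0 < T₀ ∧
      ∀ δ : ℝ, 0 < δ → δ < 1 / 2 →
      ∀ t r : ℝ, T₀ ≤ t → R'' < r - t → r - t < R →
      ∀ ω : Fin 3 → ℝ, (∑ i : Fin 3, ω i ^ 2) = 1 →
      ∀ ξ : Fin 4 → ℝ, ∀ τ : ℝ,
        -(r⁻¹) * qsym δ t ω ξ ^ 2 - 4 * r⁻¹ * p1sym δ t τ ξ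
            + t ^ (-δ - 2) * (ξ 0 ^ 2 + τ ^ 2)
            + 4 * r⁻¹ * qsym δ t ω ξ * ((-1 + t ^ (-δ - 1)) * ξ 0)
          ≤ bsym δ t r τ ω ξ := by
  refine ⟨|R''| + 7 * |R| + 5, by positivity, ?_⟩
  intro δ hδ0 hδ2 t r ht hrl hru ω hω ξ τ
  have habs1 : R'' ≤ |R''| := le_abs_self R''
  have habs2 : R ≤ |R| := le_abs_self R
  have habs3 : -R'' ≤ |R''| := neg_le_abs R''
  have habs4 : (0:ℝ) ≤ |R| := abs_nonneg R
  have habs5 : (0:ℝ) ≤ |R''| := abs_nonneg R''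
  have ht5 : (5:ℝ) ≤ t := by
    have : (0:ℝ) ≤ |R''| + 7 * |R| := by positivity
    linarith
  have htpos : (0:ℝ) < t := by linarith
  have ht1 : (1:ℝ) ≤ t := by linarith
  have hrpos : (0:ℝ) < r := by linarith
  set s := t ^ (-δ - 1) with hs_def
  have hspos : 0 < s := Real.rpow_pos_of_pos htpos _
  have hstinv : s ≤ t⁻¹ := by
    have h1 : t ^ (-δ - 1) ≤ t ^ (-1 : ℝ) :=
      Real.rpow_le_rpow_of_exponent_le ht1 (by linarith)
    simpa [Real.rpow_neg_one] using h1
  have hst1 : s * t ≤ 1 := by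
    have := mul_le_mul_of_nonneg_right hstinv htpos.le
    simpa [inv_mul_cancel₀ htpos.ne'] using this
  have hs1 : s ≤ 1 := by nlinarith
  have hu : t ^ (-δ - 2) = s * t⁻¹ := by
    rw [hs_def, ← Real.rpow_neg_one t, ← Real.rpow_add htpos]
    congr 1
    ring
  -- key bound
  have hkey : (4 * δ + 5) * r ≤ 4 * (2 - s) * t := by
    have h1 : (4 * δ + 5) * r ≤ 7 * r := by nlinarith
    have h2 : 7 * r ≤ 7 * t + 7 * |R| := by nlinarith
    have h3 : 7 * |R| ≤ t - 5 := by linarith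
    nlinarith
  have hrinv : (0:ℝ) < r⁻¹ := inv_pos.mpr hrpos
  have htinv : (0:ℝ) < t⁻¹ := inv_pos.mpr htpos
  have hC1 : 0 ≤ 4 * r⁻¹ * s * (2 - s) - (4 * δ + 5) * s * t⁻¹ := by
    have hid : 4 * r⁻¹ * s * (2 - s) - (4 * δ + 5) * s * t⁻¹
        = s * t⁻¹ * r⁻¹ * (4 * (2 - s) * t - (4 * δ + 5) * r) := by
      field_simp
    rw [hid]
    have : 0 ≤ 4 * (2 - s) * t - (4 * δ + 5) * r := by linarith
    positivity
  have hC2 : 0 ≤ 4 * r⁻¹ * s * (2 - s)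
      - (4 * (δ + 1) * (1 - s) ^ 2 + 1) * s * t⁻¹ := by
    have h4 : (4 * (δ + 1) * (1 - s) ^ 2 + 1) * (s * t⁻¹)
        ≤ (4 * δ + 5) * (s * t⁻¹) := by
      have hst : 0 ≤ s * t⁻¹ := by positivity
      have h5 : 4 * (δ + 1) * (1 - s) ^ 2 + 1 ≤ 4 * δ + 5 := by
        nlinarith [mul_nonneg (show (0:ℝ) ≤ δ + 1 by linarith)
          (mul_nonneg hspos.le (show (0:ℝ) ≤ 2 - s by linarith))]
      exact mul_le_mul_of_nonneg_right h5 hst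
    nlinarith
  have key : bsym δ t r τ ω ξ -
      (-(r⁻¹) * qsym δ t ω ξ ^ 2 - 4 * r⁻¹ * p1sym δ t τ ξ
        + t ^ (-δ - 2) * (ξ 0 ^ 2 + τ ^ 2)
        + 4 * r⁻¹ * qsym δ t ω ξ * ((-1 + t ^ (-δ - 1)) * ξ 0))
      = ξ 0 ^ 2 * (4 * r⁻¹ * s * (2 - s) - (4 * δ + 5) * s * t⁻¹)
        + τ ^ 2 * (4 * r⁻¹ * s * (2 - s)
            - (4 * (δ + 1) * (1 - s) ^ 2 + 1) * s * t⁻¹) := by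
    simp only [bsym, p1sym, qsym, Fin.sum_univ_three, hu, ← hs_def]
    ring
  linarith [key, mul_nonneg (sq_nonneg (ξ 0)) hC1, mul_nonneg (sq_nonneg τ) hC2]

end UCP
end
end

section
/- Fix ν > 0 and κ ∈ ℝ, and let h(t,r) := (r+ν)² − (t+κ)². Then for all t > 0 and r > 0 with h(t,r) > 0: ∂_t²h − 2(∂_t h/∂_r h)∂_t∂_r h + (∂_t h/∂_r h)²∂_r²h + r^{−1}(1 − (∂_t h/∂_r h)²)∂_r h = 2ν·h·r^{−1}(r+ν)^{−2} > 0. (Here ∂_r h = 2(r+ν) > 0, ∂_t h = −2(t+κ), ∂_t²h = −2, ∂_r²h = 2, ∂_t∂_r h = 0.) -/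
noncomputable section

namespace UCP

/-- `∂_t h` for a function `h = h(t,r)`. -/
def hT (h : ℝ × ℝ → ℝ) (q : ℝ × ℝ) : ℝ := fderiv ℝ h q (1, 0)

/-- `∂_r h` for a function `h = h(t,r)`. -/
def hR (h : ℝ × ℝ → ℝ) (q : ℝ × ℝ) : ℝ := fderiv ℝ h q (0, 1)

/-- The hyperboloidal weight `h(t,r) = (r+ν)² - (t+κ)²`. -/
def hfun (ν κ : ℝ) : ℝ × ℝ → ℝ := fun q => (q.2 + ν) ^ 2 - (q.1 + κ) ^ 2

lemma hasFDeriv_hfun (ν κ : ℝ) (q : ℝ × ℝ) :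
    HasFDerivAt (hfun ν κ)
      (((q.2 + ν) • ContinuousLinearMap.snd ℝ ℝ ℝ + (q.2 + ν) • ContinuousLinearMap.snd ℝ ℝ ℝ)
        - ((q.1 + κ) • ContinuousLinearMap.fst ℝ ℝ ℝ + (q.1 + κ) • ContinuousLinearMap.fst ℝ ℝ ℝ)) q := by
  have s : HasFDerivAt (fun p : ℝ × ℝ => p.2 + ν) (ContinuousLinearMap.snd ℝ ℝ ℝ) q :=
    (hasFDerivAt_snd).add_const ν
  have f : HasFDerivAt (fun p : ℝ × ℝ => p.1 + κ) (ContinuousLinearMap.fst ℝ ℝ ℝ) q :=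
    (hasFDerivAt_fst).add_const κ
  have h2 := s.mul s
  have h1 := f.mul f
  have := h2.sub h1
  have hfe : hfun ν κ = fun x : ℝ × ℝ => (x.2 + ν) * (x.2 + ν) - (x.1 + κ) * (x.1 + κ) := by
    funext p; simp [hfun]; ring
  rw [hfe]; exact this

lemma hT_hfun (ν κ : ℝ) : hT (hfun ν κ) = fun q => -(2 * (q.1 + κ)) := by
  funext q
  rw [hT, (hasFDeriv_hfun ν κ q).fderiv]
  simp
  ring

lemma hR_hfun (ν κ : ℝ) : hR (hfun ν κ) = fun q => 2 * (q.2 + ν) := by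
  funext q
  rw [hR, (hasFDeriv_hfun ν κ q).fderiv]
  simp
  ring

lemma hTT_hfun (ν κ : ℝ) (q : ℝ × ℝ) : hT (hT (hfun ν κ)) q = -2 := by
  have d : HasFDerivAt (fun p : ℝ × ℝ => -(2 * (p.1 + κ)))
      (-((2 : ℝ) • ContinuousLinearMap.fst ℝ ℝ ℝ)) q :=
    (((hasFDerivAt_fst).add_const κ).const_mul 2).neg
  rw [hT_hfun, hT, d.fderiv]
  simp

lemma hTR_hfun (ν κ : ℝ) (q : ℝ × ℝ) : hT (hR (hfun ν κ)) q = 0 := by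
  have d : HasFDerivAt (fun p : ℝ × ℝ => 2 * (p.2 + ν))
      ((2 : ℝ) • ContinuousLinearMap.snd ℝ ℝ ℝ) q :=
    ((hasFDerivAt_snd).add_const ν).const_mul 2
  rw [hR_hfun, hT, d.fderiv]
  simp

lemma hRR_hfun (ν κ : ℝ) (q : ℝ × ℝ) : hR (hR (hfun ν κ)) q = 2 := by
  have d : HasFDerivAt (fun p : ℝ × ℝ => 2 * (p.2 + ν))
      ((2 : ℝ) • ContinuousLinearMap.snd ℝ ℝ ℝ) q :=
    ((hasFDerivAt_snd).add_const ν).const_mul 2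
  rw [hR_hfun, hR, d.fderiv]
  simp

/-- Example 2.11 of the paper: the pseudoconvexity expression of
`h(t,r) = (r+ν)² - (t+κ)²` equals `2ν h r⁻¹ (r+ν)⁻²`, which is positive on `{h > 0}`. -/
theorem stmt15 (ν κ : ℝ) (hν : 0 < ν) :
    ∀ t r : ℝ, 0 < t → 0 < r → 0 < hfun ν κ (t, r) →
      (hT (hT (hfun ν κ)) (t, r)
          - 2 * (hT (hfun ν κ) (t, r) / hR (hfun ν κ) (t, r))
              * hT (hR (hfun ν κ)) (t, r)
          + (hT (hfun ν κ) (t, r) / hR (hfun ν κ) (t, r)) ^ 2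
              * hR (hR (hfun ν κ)) (t, r)
          + r⁻¹ * (1 - (hT (hfun ν κ) (t, r) / hR (hfun ν κ) (t, r)) ^ 2)
              * hR (hfun ν κ) (t, r)
        = 2 * ν * hfun ν κ (t, r) * r⁻¹ * ((r + ν) ^ 2)⁻¹)
      ∧ 0 < 2 * ν * hfun ν κ (t, r) * r⁻¹ * ((r + ν) ^ 2)⁻¹ := by
  intro t r ht hr hh
  have hrν : (0 : ℝ) < r + ν := by linarith
  constructor
  · rw [hTT_hfun, hTR_hfun, hRR_hfun, hT_hfun, hR_hfun]
    simp only [hfun]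
    have h1 : r ≠ 0 := ne_of_gt hr
    have h2 : r + ν ≠ 0 := ne_of_gt hrν
    field_simp
    ring
  · positivity

end UCP
end
end

section
/- Fix R₁ > 0 and R'' ∈ ℝ with |R''| < R₁. Then D_{R₁,R''} = ⋃ { S_{ν,κ,c} : ν > 0, R'' + ν < κ < R₁ + ν, c > (R₁+ν)² − κ² }; moreover, whenever ν > 0 and R'' + ν < κ < R₁ + ν one has (R₁+ν)² − κ² > 0 (so the constraint set of c is contained in (0,∞)). -/
noncomputable section
open MeasureTheory Real Set Filter Topology

namespace UCP

/-- Spacetime `ℝ^{1+3}`: a point is `(t, x)` with `x ∈ ℝ³`. -/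
abbrev Spc : Type := ℝ × EuclideanSpace ℝ (Fin 3)

/-- Coordinate directions `e_α`, `α = 0,1,2,3` (`e_0` is the time direction). -/
def eVec (α : Fin 4) : Spc :=
  Fin.cases ((1 : ℝ), (0 : EuclideanSpace ℝ (Fin 3)))
    (fun i => ((0 : ℝ), EuclideanSpace.single i (1 : ℝ))) α

/-- The partial derivative `∂_α u`. -/
def pd (α : Fin 4) (u : Spc → ℝ) (p : Spc) : ℝ := fderiv ℝ u p (eVec α)

/-- `∂_t u`. -/
def dt (u : Spc → ℝ) : Spc → ℝ := pd 0 u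

/-- `∂_i u`, `i = 1,2,3`. -/
def dxi (i : Fin 3) (u : Spc → ℝ) : Spc → ℝ := pd i.succ u

/-- The d'Alembertian `□u = -∂_t² u + Δ_x u`. -/
def box (u : Spc → ℝ) (p : Spc) : ℝ :=
  - dt (dt u) p + ∑ i : Fin 3, dxi i (dxi i u) p

/-- Signs of the Minkowski metric `diag(-1,1,1,1)`, so that `∂^α = eta α • ∂_α`. -/
def eta (α : Fin 4) : ℝ := if α = 0 then -1 else 1

/-- `r = |x|`. -/
def rr (p : Spc) : ℝ := ‖p.2‖

/-- The radial derivative `∂_r u = Σ_i (x_i/r) ∂_i u`. -/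
def dr (u : Spc → ℝ) (p : Spc) : ℝ := ∑ i : Fin 3, (p.2 i / rr p) * dxi i u p

/-- `ω̂ = (-1, x/r)` as a `Fin 4`-indexed family. -/
def hatom (p : Spc) (α : Fin 4) : ℝ := Fin.cases (-1 : ℝ) (fun i => p.2 i / rr p) α

/-- The region `𝒟_{R₁,R''} = {t > 0, (r-t-R'')(r+t+R'') > R₁² - (R'')²}`. -/
def DD (R₁ R'' : ℝ) : Set Spc :=
  {p | 0 < p.1 ∧ R₁ ^ 2 - R'' ^ 2 < (rr p - p.1 - R'') * (rr p + p.1 + R'')}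

/-- The hyperboloid `S_{ν,κ,c} = {t > 0, (r+ν)² - (t+κ)² = c}`. -/
def Shyp (ν κ c : ℝ) : Set Spc :=
  {p | 0 < p.1 ∧ (rr p + ν) ^ 2 - (p.1 + κ) ^ 2 = c}

/-- Lemma 5.2 of the paper: the foliation of `𝒟_{R₁,R''}` by the
pseudoconvex hyperboloids `S_{ν,κ,c}`. -/
theorem stmt16 (R₁ R'' : ℝ) (hR₁ : 0 < R₁) (hR'' : |R''| < R₁) :
    (∀ ν κ : ℝ, 0 < ν → R'' + ν < κ → κ < R₁ + ν → 0 < (R₁ + ν) ^ 2 - κ ^ 2) ∧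
    DD R₁ R'' = ⋃ (ν : ℝ) (κ : ℝ) (c : ℝ)
      (_ : 0 < ν ∧ R'' + ν < κ ∧ κ < R₁ + ν ∧ (R₁ + ν) ^ 2 - κ ^ 2 < c),
      Shyp ν κ c := by
  have hR1a : -R₁ < R'' := (abs_lt.mp hR'').1
  have hR1b : R'' < R₁ := (abs_lt.mp hR'').2
  constructor
  · intro ν κ hν h1 h2
    nlinarith
  · ext p
    simp only [DD, Shyp, mem_setOf_eq, mem_iUnion]
    set t := p.1 with ht_def
    set r := rr p with hr_def
    have hr0 : 0 ≤ r := norm_nonneg _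
    constructor
    · rintro ⟨ht, hlt⟩
      have hA : 0 < r ^ 2 - t ^ 2 - 2 * t * R'' - R₁ ^ 2 := by nlinarith
      set A := r ^ 2 - t ^ 2 - 2 * t * R'' - R₁ ^ 2 with hA_def
      set B := 2 * t + 2 * |r - t - R₁| + 1 with hB_def
      have hB : 0 < B := by
        have := abs_nonneg (r - t - R₁); positivity
      set δ := min ((R₁ - R'') / 2) (A / (2 * B)) with hδ_def
      have hδpos : 0 < δ := lt_min (by linarith) (by positivity)
      have hδ1 : δ ≤ (R₁ - R'') / 2 := min_le_left _ _
      have hδ2 : δ ≤ A / (2 * B) := min_le_right _ _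
      have hδB : δ * B ≤ A / 2 := by
        have h := mul_le_mul_of_nonneg_right hδ2 hB.le
        have he : A / (2 * B) * B = A / 2 := by field_simp
        linarith [he ▸ h]
      refine ⟨δ, R'' + 2 * δ, (r + δ) ^ 2 - (t + (R'' + 2 * δ)) ^ 2,
        ⟨hδpos, by linarith, by linarith, ?_⟩, ht, rfl⟩
      have habs1 : r - t - R₁ ≤ |r - t - R₁| := le_abs_self _
      have habs2 : -|r - t - R₁| ≤ r - t - R₁ := neg_abs_le _
      nlinarith [mul_le_mul_of_nonneg_left habs2 (le_of_lt hδpos),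
        mul_pos ht hδpos, hδB]
    · rintro ⟨ν, κ, c, ⟨hν, h1, h2, h3⟩, ht, heq⟩
      refine ⟨ht, ?_⟩
      have h3' : (R₁ + ν) ^ 2 - κ ^ 2 < (r + ν) ^ 2 - (t + κ) ^ 2 := heq ▸ h3
      have hκ : t * (R'' + ν) < t * κ := by
        exact mul_lt_mul_of_pos_left h1 ht
      by_cases hcase : 0 ≤ R₁ - r + t
      · nlinarith [mul_nonneg hν.le hcase]
      · push_neg at hcase
        nlinarith [mul_pos (by linarith : (0:ℝ) < r - R₁ - t)
          (by linarith : (0:ℝ) < r + R₁ + t), mul_pos ht (by linarith : (0:ℝ) < R₁ - R'')]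


end UCP
end
end

section
/- Fix R₁ > 0, R'' ∈ ℝ, T₀ > 0, δ ∈ (0,1/2), ν > 0, and κ with R'' + ν < κ < R₁ + ν. Fix c₁, c₂ with (R₁+ν)² − κ² < c₁ ≤ c₂. Then there exist constants 0 < T₁ < T₂ such that ⋃_{c₁ ≤ c ≤ c₂} S_{ν,κ,c} \ K_{δ,T₀,R'',R₁} ⊂ [T₁,T₂] × ℝ³; consequently, the closure of ⋃_{c₁ ≤ c ≤ c₂} S_{ν,κ,c} \ K_{δ,T₀,R'',R₁} is a compact subset of [T₁,T₂] × ℝ³. -/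
noncomputable section
open MeasureTheory Real Set Filter Topology

namespace UCP

/-- The region `Ω_{T₀,R''} = {t ≥ T₀, r - t > R''}`. -/
def Om (T₀ R'' : ℝ) : Set Spc := {p | T₀ ≤ p.1 ∧ R'' < rr p - p.1}

/-- The open region `{t > T₀, r - t > R''}`. -/
def OmO (T₀ R'' : ℝ) : Set Spc := {p | T₀ < p.1 ∧ R'' < rr p - p.1}

/-- The weight `f_δ(t,x) = r - t - δ⁻¹ t^{-δ}`. -/
def fdel (δ : ℝ) (p : Spc) : ℝ := rr p - p.1 - δ⁻¹ * p.1 ^ (-δ)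

/-- `P₁ψ = □ψ + τ² (∂^α f ∂_α f) ψ`. -/
def P1 (τ δ : ℝ) (ψ : Spc → ℝ) (p : Spc) : ℝ :=
  box ψ p + τ ^ 2 * (∑ α : Fin 4, eta α * pd α (fdel δ) p * pd α (fdel δ) p) * ψ p

/-- `P₂ψ = -2τ ∂^α f ∂_α ψ`. -/
def P2 (τ δ : ℝ) (ψ : Spc → ℝ) (p : Spc) : ℝ :=
  -2 * τ * ∑ α : Fin 4, eta α * pd α (fdel δ) p * pd α ψ p

/-- The weighted inner product `⟨F,G⟩ = ∫_{Ω_{T₀,R''}} F G t² dx dt`. -/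
def ip (T₀ R'' : ℝ) (F G : Spc → ℝ) : ℝ := ∫ p in Om T₀ R'', F p * G p * p.1 ^ 2

/-- The weighted norm `‖F‖ = ⟨F,F⟩^{1/2}`. -/
def nrm (T₀ R'' : ℝ) (F : Spc → ℝ) : ℝ := Real.sqrt (ip T₀ R'' F F)

/-- The region `K_{δ,T₀,R'',R₁} = (Ω_{T₀,R''} ∩ {f_δ ≥ R''}) ∪ {t > 0, r - t ≥ R₁}`. -/
def Kset (δ T₀ R'' R₁ : ℝ) : Set Spc :=
  (Om T₀ R'' ∩ {p : Spc | R'' ≤ fdel δ p}) ∪ {p : Spc | 0 < p.1 ∧ R₁ ≤ rr p - p.1}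

private lemma aux1 (t r R₁ ν κ c₁ : ℝ) (h1 : c₁ ≤ (r + ν) ^ 2 - (t + κ) ^ 2)
    (h2 : 0 ≤ t + R₁ - r) (h3 : 0 ≤ t + R₁ + 2 * ν + r) :
    c₁ - ((R₁ + ν) ^ 2 - κ ^ 2) ≤ t * (2 * (R₁ + ν - κ)) := by
  nlinarith [mul_nonneg h2 h3]

private lemma aux2 (t r ν κ c₁ ε : ℝ) (h1 : c₁ ≤ (r + ν) ^ 2 - (t + κ) ^ 2)
    (h2 : 0 ≤ t + κ - ε - (r + ν)) (h3 : 0 ≤ t + κ - ε + (r + ν))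
    (h4 : ε ^ 2 - c₁ < 2 * ε * (t + κ)) : False := by
  nlinarith [mul_nonneg h2 h3]

private lemma aux3 (t r ν κ c₁ ε R'' : ℝ) (hε : 0 < ε)
    (h1 : c₁ ≤ (r + ν) ^ 2 - (t + κ) ^ 2)
    (hdiff : r + ν - t - κ < -(ε / 2)) (hsum : 0 < r + ν + t + κ)
    (hD : R'' < r - t) (h3 : -c₁ - ε / 2 * (R'' + ν + κ) < ε * t) : False := by
  nlinarith [mul_lt_mul_of_pos_right hdiff hsum,
    mul_lt_mul_of_pos_left (show 2 * t + R'' + ν + κ < r + ν + t + κ by linarith)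
      (half_pos hε)]

set_option maxHeartbeats 1600000 in
/-- Lemma 5.8 of the paper: the part of the hyperboloids
`S_{ν,κ,c}`, `c₁ ≤ c ≤ c₂`, outside `K_{δ,T₀,R'',R₁}` lies in a time slab
`[T₁,T₂] × ℝ³`, and hence has compact closure. -/
theorem stmt17 (R₁ R'' T₀ δ ν κ c₁ c₂ : ℝ) (hR₁ : 0 < R₁) (hT₀ : 0 < T₀)
    (hδ0 : 0 < δ) (hδ : δ < 1 / 2) (hν : 0 < ν)
    (hκ1 : R'' + ν < κ) (hκ2 : κ < R₁ + ν)
    (hc1 : (R₁ + ν) ^ 2 - κ ^ 2 < c₁) (hc12 : c₁ ≤ c₂) :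
    ∃ T₁ T₂ : ℝ, 0 < T₁ ∧ T₁ < T₂ ∧
      ((⋃ c ∈ Icc c₁ c₂, Shyp ν κ c) \ Kset δ T₀ R'' R₁
          ⊆ {p : Spc | p.1 ∈ Icc T₁ T₂}) ∧
      closure ((⋃ c ∈ Icc c₁ c₂, Shyp ν κ c) \ Kset δ T₀ R'' R₁)
          ⊆ {p : Spc | p.1 ∈ Icc T₁ T₂} ∧
      IsCompact (closure ((⋃ c ∈ Icc c₁ c₂, Shyp ν κ c) \ Kset δ T₀ R'' R₁)) := by
  have hε : (0:ℝ) < κ - R'' - ν := by linarith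
  have hμ : (0:ℝ) < R₁ + ν - κ := by linarith
  set ε := κ - R'' - ν with hεdef
  set T₁ := (c₁ - ((R₁ + ν) ^ 2 - κ ^ 2)) / (2 * (R₁ + ν - κ)) with hT₁def
  have hT₁pos : 0 < T₁ := div_pos (by linarith) (by linarith)
  set Tb := (ε ^ 2 - c₁) / (2 * ε) - κ with hTbdef
  set Tc := max 1 ((2 / (δ * ε)) ^ (δ⁻¹ : ℝ)) with hTcdef
  set Td := (-c₁ - (ε / 2) * (R'' + ν + κ)) / ε with hTddef
  set Te := (-(R'' + ν + κ)) / 2 with hTedef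
  set T₂ := T₁ + 1 + |T₀| + |Tb| + |Tc| + |Td| + |Te| with hT₂def
  have hTa0 := abs_nonneg T₀
  have hTb0 := abs_nonneg Tb
  have hTc0 := abs_nonneg Tc
  have hTd0 := abs_nonneg Td
  have hTe0 := abs_nonneg Te
  have hTa1 := le_abs_self T₀
  have hTb1 := le_abs_self Tb
  have hTc1 := le_abs_self Tc
  have hTd1 := le_abs_self Td
  have hTe1 := le_abs_self Te
  have hT₁₂ : T₁ < T₂ := by rw [hT₂def]; linarith
  have hT₂pos : 0 < T₂ := lt_trans hT₁pos hT₁₂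
  have hmain : ∀ p : Spc, p ∈ (⋃ c ∈ Icc c₁ c₂, Shyp ν κ c) \ Kset δ T₀ R'' R₁ →
      T₁ ≤ p.1 ∧ p.1 ≤ T₂ ∧ (rr p + ν) ^ 2 ≤ c₂ + (T₂ + |κ|) ^ 2 := by
    intro p hp
    obtain ⟨hpU, hpK⟩ := hp
    simp only [mem_iUnion, mem_Icc, Shyp, mem_setOf_eq, exists_prop] at hpU
    obtain ⟨c, ⟨hcc₁, hcc₂⟩, ht0, hS⟩ := hpU
    have hr0 : (0:ℝ) ≤ rr p := norm_nonneg _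
    set t := p.1 with htdef
    set r := rr p with hrdef
    rw [← hS] at hcc₁ hcc₂
    have hpK1 : p ∉ Om T₀ R'' ∩ {q : Spc | R'' ≤ fdel δ q} := fun h => hpK (Or.inl h)
    have hpK2 : p ∉ {q : Spc | 0 < q.1 ∧ R₁ ≤ rr q - q.1} := fun h => hpK (Or.inr h)
    have hrR₁ : r - t < R₁ := by
      by_contra h
      exact hpK2 ⟨ht0, le_of_not_gt h⟩
    have hlow : T₁ ≤ t := by
      rw [hT₁def, div_le_iff₀ (by linarith)]
      exact aux1 t r R₁ ν κ c₁ hcc₁ (by linarith) (by linarith)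
    have hup : t ≤ T₂ := by
      by_contra h
      push_neg at h
      have hT₀t : T₀ < t := by linarith
      rcases le_or_gt (r - t) R'' with hcase | hcase
      · have hTbt : Tb < t := by linarith
        have h2 : ε ^ 2 - c₁ < 2 * ε * (t + κ) := by
          rw [hTbdef] at hTbt
          have := (div_lt_iff₀ (by linarith : (0:ℝ) < 2 * ε)).mp (by linarith : (ε ^ 2 - c₁) / (2 * ε) < t + κ)
          linarith
        exact aux2 t r ν κ c₁ ε hcc₁ (by rw [hεdef]; linarith) (by rw [hεdef]; linarith) h2
      · have hOm : p ∈ Om T₀ R'' := ⟨le_of_lt hT₀t, hcase⟩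
        have hf : fdel δ p < R'' := by
          by_contra hf
          push_neg at hf
          exact hpK1 ⟨hOm, hf⟩
        have hTct : Tc < t := by linarith
        have ht1 : (1:ℝ) ≤ t := le_trans (le_trans (le_max_left _ _) hTct.le) le_rfl
        have htpos : (0:ℝ) < t := by linarith
        have hbase : (0:ℝ) < 2 / (δ * ε) := by positivity
        have hTct' : (2 / (δ * ε)) ^ (δ⁻¹ : ℝ) ≤ t :=
          le_trans (le_max_right 1 _) hTct.le
        have hpow : 2 / (δ * ε) ≤ t ^ (δ : ℝ) := by
          calc 2 / (δ * ε) = ((2 / (δ * ε)) ^ (δ⁻¹ : ℝ)) ^ (δ : ℝ) :=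
                (Real.rpow_inv_rpow hbase.le (ne_of_gt hδ0)).symm
            _ ≤ t ^ (δ : ℝ) := Real.rpow_le_rpow (Real.rpow_nonneg hbase.le _) hTct' hδ0.le
        have hneg : t ^ (-δ : ℝ) ≤ δ * ε / 2 := by
          rw [Real.rpow_neg htpos.le, show δ * ε / 2 = (2 / (δ * ε))⁻¹ by rw [inv_div]]
          exact inv_anti₀ hbase hpow
        have hδinv : δ⁻¹ * t ^ (-δ : ℝ) ≤ ε / 2 := by
          have h1 := mul_le_mul_of_nonneg_left hneg (inv_nonneg.mpr hδ0.le)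
          have h2 : δ⁻¹ * (δ * ε / 2) = ε / 2 := by field_simp
          linarith
        have hfd : r - t < R'' + ε / 2 := by
          have hfe : fdel δ p = r - t - δ⁻¹ * t ^ (-δ : ℝ) := rfl
          rw [hfe] at hf
          linarith
        have hTet : Te < t := by linarith
        have hsum : (0:ℝ) < r + ν + t + κ := by
          rw [hTedef] at hTet
          linarith
        have hTdt : Td < t := by linarith
        have h3 : -c₁ - (ε / 2) * (R'' + ν + κ) < ε * t := by
          rw [hTddef] at hTdt
          have := (div_lt_iff₀ hε).mp hTdt
          linarith
        have hdiff : r + ν - t - κ < -(ε / 2) := by rw [hεdef] at hfd ⊢; linarith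
        exact aux3 t r ν κ c₁ ε R'' hε hcc₁ hdiff hsum hcase (by linarith)
    refine ⟨hlow, hup, ?_⟩
    have hκa := le_abs_self κ
    have hκb := neg_abs_le κ
    have h1 : (t + κ) ^ 2 ≤ (T₂ + |κ|) ^ 2 :=
      sq_le_sq' (by linarith) (by linarith)
    linarith
  set A := (⋃ c ∈ Icc c₁ c₂, Shyp ν κ c) \ Kset δ T₀ R'' R₁ with hA
  have hsub1 : A ⊆ {p : Spc | p.1 ∈ Icc T₁ T₂} := fun p hp =>
    ⟨(hmain p hp).1, (hmain p hp).2.1⟩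
  have hclosed : IsClosed {p : Spc | p.1 ∈ Icc T₁ T₂} :=
    (isClosed_Icc).preimage continuous_fst
  have hsubB : A ⊆ Icc T₁ T₂ ×ˢ Metric.closedBall (0 : EuclideanSpace ℝ (Fin 3))
      (Real.sqrt (c₂ + (T₂ + |κ|) ^ 2)) := by
    intro p hp
    obtain ⟨h1, h2, h3⟩ := hmain p hp
    refine ⟨⟨h1, h2⟩, ?_⟩
    rw [Metric.mem_closedBall, dist_zero_right]
    have hr0 : (0:ℝ) ≤ rr p := norm_nonneg _
    have heq : rr p + ν = Real.sqrt ((rr p + ν) ^ 2) := (Real.sqrt_sq (by linarith)).symm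
    have hle : rr p + ν ≤ Real.sqrt (c₂ + (T₂ + |κ|) ^ 2) := by
      rw [heq]; exact Real.sqrt_le_sqrt h3
    have hrr : rr p = ‖p.2‖ := rfl
    linarith [hrr ▸ hle]
  have hbdd : Bornology.IsBounded A :=
    (((Metric.isBounded_Icc T₁ T₂).prod (Metric.isBounded_closedBall))).subset hsubB
  exact ⟨T₁, T₂, hT₁pos, hT₁₂, hsub1, closure_minimal hsub1 hclosed,
    hbdd.isCompact_closure⟩

end UCP
end
end

section
/- Fix R₁ > 0, R'' ∈ ℝ, T₀ > 0, δ ∈ (0,1/2), ν > 0, and κ with R'' + ν < κ < R₁ + ν. Then there exists c* > 0 (depending on δ, T₀, R₁, R'', ν, κ) with c* > (R₁+ν)² − κ² such that for every c ≥ c*: S_{ν,κ,c} ⊂ K_{δ,T₀,R'',R₁}. -/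
noncomputable section
open MeasureTheory Real Set Filter Topology

namespace UCP

set_option maxHeartbeats 1000000 in
/-- Lemma 5.9 of the paper: for `c` sufficiently large, the
hyperboloid `S_{ν,κ,c}` is contained in `K_{δ,T₀,R'',R₁}`. -/
theorem stmt18 (R₁ R'' T₀ δ ν κ : ℝ) (hR₁ : 0 < R₁) (hT₀ : 0 < T₀)
    (hδ0 : 0 < δ) (hδ : δ < 1 / 2) (hν : 0 < ν)
    (hκ1 : R'' + ν < κ) (hκ2 : κ < R₁ + ν) :
    ∃ cstar : ℝ, 0 < cstar ∧ (R₁ + ν) ^ 2 - κ ^ 2 < cstar ∧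
      ∀ c, cstar ≤ c → Shyp ν κ c ⊆ Kset δ T₀ R'' R₁ := by
  set ε := R₁ + ν - κ with hε_def
  have hε : 0 < ε := by simp only [hε_def]; linarith
  set η := κ - ν - R'' with hη_def
  have hη : 0 < η := by simp only [hη_def]; linarith
  have hδη : 0 < δ * η := mul_pos hδ0 hη
  set M : ℝ := ((δ * η)⁻¹) ^ (1 / δ) with hM_def
  have hM : 0 < M := Real.rpow_pos_of_pos (inv_pos.mpr hδη) _
  set T₁ : ℝ := max (max T₀ (1 - κ)) M with hT₁_def
  have hT₁T₀ : T₀ ≤ T₁ := le_trans (le_max_left _ _) (le_max_left _ _)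
  have hT₁κ : 1 ≤ T₁ + κ := by
    have h := le_trans (le_max_right T₀ (1 - κ)) (le_max_left (max T₀ (1 - κ)) M)
    rw [← hT₁_def] at h; linarith
  have hT₁M : M ≤ T₁ := le_max_right _ _
  refine ⟨max (max (2 * ε * (T₁ + κ) + ε ^ 2) ((R₁ + ν) ^ 2 - κ ^ 2 + 1)) 1, ?_, ?_, ?_⟩
  · exact lt_of_lt_of_le one_pos (le_max_right _ _)
  · have h : (R₁ + ν) ^ 2 - κ ^ 2 + 1 ≤ max (max (2 * ε * (T₁ + κ) + ε ^ 2) ((R₁ + ν) ^ 2 - κ ^ 2 + 1)) 1 :=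
      le_trans (le_max_right _ _) (le_max_left _ _)
    linarith
  · intro c hc p hp
    obtain ⟨ht, heq⟩ := hp
    have hr0 : 0 ≤ rr p := norm_nonneg _
    by_cases hR : R₁ ≤ rr p - p.1
    · exact Or.inr ⟨ht, hR⟩
    · left
      push_neg at hR
      have hc1 : 2 * ε * (T₁ + κ) + ε ^ 2 ≤ c :=
        le_trans (le_trans (le_max_left _ _) (le_max_left _ _)) hc
      have hcpos : (1 : ℝ) ≤ c := le_trans (le_max_right _ _) hc
      have h1 : rr p + ν < p.1 + κ + ε := by simp only [hε_def]; linarith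
      have h2 : (rr p + ν) ^ 2 < (p.1 + κ + ε) ^ 2 := by nlinarith
      have h3 : 2 * ε * (T₁ + κ) < 2 * ε * (p.1 + κ) := by nlinarith
      have ht1 : T₁ < p.1 := by nlinarith
      have htκ : 0 < p.1 + κ := by linarith
      have h6 : (p.1 + κ) ^ 2 < (rr p + ν) ^ 2 := by linarith
      have hrt : κ - ν < rr p - p.1 := by
        by_contra hle
        push_neg at hle
        have h7 : rr p + ν ≤ p.1 + κ := by linarith
        have h8 : (rr p + ν) * (rr p + ν) ≤ (p.1 + κ) * (p.1 + κ) :=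
          mul_le_mul h7 h7 (by linarith) (by linarith)
        nlinarith
      have htpos : 0 < p.1 := lt_of_lt_of_le hT₀ (le_of_lt (lt_of_le_of_lt hT₁T₀ ht1))
      have hMδ : M ^ δ = (δ * η)⁻¹ := by
        rw [hM_def, ← Real.rpow_mul (le_of_lt (inv_pos.mpr hδη)), one_div,
          inv_mul_cancel₀ (ne_of_gt hδ0), Real.rpow_one]
      have htδ : (δ * η)⁻¹ ≤ p.1 ^ δ := by
        rw [← hMδ]
        exact Real.rpow_le_rpow (le_of_lt hM) (by linarith) (le_of_lt hδ0)
      have htδpos : 0 < p.1 ^ δ := Real.rpow_pos_of_pos htpos _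
      have htneg : p.1 ^ (-δ) ≤ δ * η := by
        rw [Real.rpow_neg (le_of_lt htpos), inv_le_comm₀ htδpos hδη]
        exact htδ
      have hkey : δ⁻¹ * p.1 ^ (-δ) ≤ η := by
        have h4 : δ⁻¹ * p.1 ^ (-δ) ≤ δ⁻¹ * (δ * η) := by
          apply mul_le_mul_of_nonneg_left htneg (le_of_lt (inv_pos.mpr hδ0))
        have h5 : δ⁻¹ * (δ * η) = η := by field_simp
        linarith
      refine ⟨⟨le_trans hT₁T₀ (le_of_lt ht1), by simp only [hη_def] at hη; linarith⟩, ?_⟩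
      show R'' ≤ fdel δ p
      unfold fdel
      simp only [hη_def] at hkey
      linarith

end UCP
end
end
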